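/- Let V be a finite-dimensional real normed vector space, let J : ℝ → L(V,V) be a differentiable family with J(t) ∘ J(t) = -id for all t, and set K(t) := J'(t). Let ω : ℝ → (alternating bilinear forms on V) be a differentiable family whose derivative decomposes as ω'(t) = φ(t) + ψ(t), where φ(t) is an alternating bilinear form that is J(t)-invariant and ψ(t) is an alternating bilinear form that is J(t)-anti-invariant. Assume ω(0) is compatible with J(0), i.e. ω(0)(J(0)u, J(0)v) = ω(0)(u,v) for all u,v. Then ω(t) is compatible with J(t) for all t if and only if for all t and all u, v ∈ V one has ψ(t)(u,v) = (1/2)·( ω(t)(K(t)u, J(t)v) + ω(t)(J(t)u, K(t)v) ). -/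

import Mathlib

lemma key_hasDeriv {V : Type*} [NormedAddCommGroup V] [NormedSpace ℝ V]
    (J : ℝ → V →L[ℝ] V) (hJdiff : Differentiable ℝ J)
    (ω : ℝ → V →L[ℝ] V →L[ℝ] ℝ) (hωdiff : Differentiable ℝ ω)
    (t : ℝ) (u v : V) :
    HasDerivAt (fun s => ω s (J s u) (J s v))
      (deriv ω t (J t u) (J t v) + ω t (deriv J t u) (J t v)
        + ω t (J t u) (deriv J t v)) t := by
  have hJu : HasDerivAt (fun s => J s u) (deriv J t u) t := by
    simpa using (hJdiff t).hasDerivAt.clm_apply (hasDerivAt_const t u)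
  have hJv : HasDerivAt (fun s => J s v) (deriv J t v) t := by
    simpa using (hJdiff t).hasDerivAt.clm_apply (hasDerivAt_const t v)
  have h1 : HasDerivAt (fun s => ω s (J s u))
      (deriv ω t (J t u) + ω t (deriv J t u)) t :=
    HasDerivAt.clm_apply (c := ω) (u := fun s => J s u) (hωdiff t).hasDerivAt hJu
  have h2 := HasDerivAt.clm_apply (c := fun s => ω s (J s u)) (u := fun s => J s v) h1 hJv
  simpa [ContinuousLinearMap.add_apply, add_assoc] using h2

/-- Lemma 4.3: compatibility of a varying Kähler form with a varying
almost complex structure is preserved iff the `(2,0)+(0,2)` part of the variation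
of `ω` is determined by the variation of `J`. -/
theorem statement2 {V : Type*} [NormedAddCommGroup V] [NormedSpace ℝ V]
    [FiniteDimensional ℝ V]
    (J : ℝ → V →L[ℝ] V) (hJdiff : Differentiable ℝ J)
    (hJsq : ∀ t : ℝ, (J t).comp (J t) = -(ContinuousLinearMap.id ℝ V))
    (ω φ ψ : ℝ → V →L[ℝ] V →L[ℝ] ℝ)
    (hωdiff : Differentiable ℝ ω)
    (hωalt : ∀ (t : ℝ) (u v : V), ω t u v = -(ω t v u))
    (hφalt : ∀ (t : ℝ) (u v : V), φ t u v = -(φ t v u))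
    (hψalt : ∀ (t : ℝ) (u v : V), ψ t u v = -(ψ t v u))
    (hφinv : ∀ (t : ℝ) (u v : V), φ t (J t u) (J t v) = φ t u v)
    (hψanti : ∀ (t : ℝ) (u v : V), ψ t (J t u) (J t v) = -(ψ t u v))
    (hderiv : ∀ t : ℝ, deriv ω t = φ t + ψ t)
    (hcompat0 : ∀ u v : V, ω 0 (J 0 u) (J 0 v) = ω 0 u v) :
    (∀ (t : ℝ) (u v : V), ω t (J t u) (J t v) = ω t u v) ↔
      (∀ (t : ℝ) (u v : V), ψ t u v =
        (1/2) * (ω t (deriv J t u) (J t v) + ω t (J t u) (deriv J t v))) := by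
  have hg : ∀ (t : ℝ) (u v : V), HasDerivAt (fun s => ω s (J s u) (J s v))
      (deriv ω t (J t u) (J t v) + ω t (deriv J t u) (J t v)
        + ω t (J t u) (deriv J t v)) t :=
    fun t u v => key_hasDeriv J hJdiff ω hωdiff t u v
  have hder : ∀ (t : ℝ) (u v : V),
      deriv ω t (J t u) (J t v) = φ t u v - ψ t u v := by
    intro t u v
    rw [hderiv]
    simp [ContinuousLinearMap.add_apply, hφinv, hψanti]
    ring
  have hω' : ∀ (t : ℝ) (u v : V), HasDerivAt (fun s => ω s u v)
      (φ t u v + ψ t u v) t := by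
    intro t u v
    have := HasDerivAt.clm_apply (c := fun s => ω s u) (u := fun _ => v)
      (HasDerivAt.clm_apply (c := ω) (u := fun _ => u) (hωdiff t).hasDerivAt (hasDerivAt_const t u))
      (hasDerivAt_const t v)
    simpa [hderiv t, ContinuousLinearMap.add_apply] using this
  constructor
  · intro hc t u v
    have h1 : HasDerivAt (fun s => ω s (J s u) (J s v)) (φ t u v + ψ t u v) t := by
      have : (fun s => ω s (J s u) (J s v)) = fun s => ω s u v := by
        funext s; exact hc s u v
      rw [this]; exact hω' t u v
    have h2 := (hg t u v).unique h1
    rw [hder t u v] at h2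
    linarith
  · intro hψeq t u v
    -- F s = ω s (J s u) (J s v) - ω s u v has zero derivative everywhere
    have hFd : ∀ s : ℝ, HasDerivAt (fun s => ω s (J s u) (J s v) - ω s u v) 0 s := by
      intro s
      have h := (hg s u v).sub (hω' s u v)
      have hval : deriv ω s (J s u) (J s v) + ω s (deriv J s u) (J s v)
          + ω s (J s u) (deriv J s v) - (φ s u v + ψ s u v) = 0 := by
        rw [hder s u v]
        have := hψeq s u v
        linarith
      rwa [hval] at h
    have hconst : ∀ s : ℝ, (fun s => ω s (J s u) (J s v) - ω s u v) s
        = (fun s => ω s (J s u) (J s v) - ω s u v) 0 := by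
      intro s
      exact is_const_of_deriv_eq_zero (fun x => (hFd x).differentiableAt)
        (fun x => (hFd x).deriv) s 0
    have h0 := hconst t
    simp only [hcompat0 u v, sub_self] at h0
    linarith [h0]
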